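/- Let S be a P-polyhedral system and let i, j be incomparable multiindices (neither is an initial segment of the other). Then P_i ∩ P_j contains at most one point, and P_i ∩ P_j = S_i(V_P) ∩ S_j(V_P). -/

import Mathlib

open Set

/-- `S` is a `P`-polyhedral system with vertex set `V`: the maps are contraction
similarities, each `Pᵢ = Sᵢ(P)` lies in `P`, distinct `Pᵢ, Pⱼ` meet in at most one
point which is then a common vertex, and every vertex of `P` is a vertex of some
`Pᵢ`. -/
def IsPPolyhedralSystem {d : ℕ} {ι : Type*} (P : Set (EuclideanSpace ℝ (Fin d)))
    (V : Finset (EuclideanSpace ℝ (Fin d)))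
    (S : ι → EuclideanSpace ℝ (Fin d) → EuclideanSpace ℝ (Fin d)) : Prop :=
  (∀ i, ∃ r ∈ Set.Ioo (0 : ℝ) 1, ∀ x y, dist (S i x) (S i y) = r * dist x y) ∧
  (∀ i, S i '' P ⊆ P) ∧
  (∀ i j, i ≠ j → (S i '' P ∩ S j '' P = ∅ ∨
    ∃ v, S i '' P ∩ S j '' P = {v} ∧ v ∈ S i '' (V : Set (EuclideanSpace ℝ (Fin d))) ∧
      v ∈ S j '' (V : Set (EuclideanSpace ℝ (Fin d))))) ∧
  ((V : Set (EuclideanSpace ℝ (Fin d))) ⊆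
    ⋃ i, S i '' (V : Set (EuclideanSpace ℝ (Fin d))))

/-- The polyhedron data: `P` is a compact set homeomorphic to the closed `d`-ball, with
finite vertex set `V ⊆ P`. -/
def IsPolyhedronWithVertices {d : ℕ} (P : Set (EuclideanSpace ℝ (Fin d)))
    (V : Finset (EuclideanSpace ℝ (Fin d))) : Prop :=
  IsCompact P ∧ (V : Set (EuclideanSpace ℝ (Fin d))) ⊆ P ∧
    Nonempty (P ≃ₜ Metric.closedBall (0 : EuclideanSpace ℝ (Fin d)) 1)

/-- The composition `S_{j₁} ∘ ⋯ ∘ S_{jₙ}` associated to a multiindex `j`. -/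
def Sw {d : ℕ} {ι : Type*} (S : ι → EuclideanSpace ℝ (Fin d) → EuclideanSpace ℝ (Fin d)) :
    List ι → EuclideanSpace ℝ (Fin d) → EuclideanSpace ℝ (Fin d) :=
  fun l => l.foldr (fun i f => S i ∘ f) id


section Aux
variable {d m : ℕ} {ι : Type*}

lemma Sw_nil (S : ι → EuclideanSpace ℝ (Fin d) → EuclideanSpace ℝ (Fin d)) :
    Sw S [] = id := rfl

lemma Sw_cons (S : ι → EuclideanSpace ℝ (Fin d) → EuclideanSpace ℝ (Fin d)) (a : ι)
    (l : List ι) : Sw S (a :: l) = S a ∘ Sw S l := rfl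

lemma Sw_append (S : ι → EuclideanSpace ℝ (Fin d) → EuclideanSpace ℝ (Fin d))
    (c l : List ι) : Sw S (c ++ l) = Sw S c ∘ Sw S l := by
  induction c with
  | nil => rfl
  | cons a c ih => simp [Sw_cons, ih, Function.comp_assoc]

lemma decomp : ∀ (i j : List ι), ¬ i <+: j → ¬ j <+: i →
    ∃ c a b i₁ j₁, a ≠ b ∧ i = c ++ a :: i₁ ∧ j = c ++ b :: j₁ := by
  intro i
  induction i with
  | nil => intro j h _; exact absurd (List.nil_prefix) h
  | cons a i ih =>
    intro j h1 h2
    cases j with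
    | nil => exact absurd (List.nil_prefix) h2
    | cons b j =>
      by_cases hab : a = b
      · subst hab
        obtain ⟨c, a', b', i₁, j₁, hne, hi, hj⟩ := ih j
          (fun h => h1 (List.cons_prefix_cons.mpr ⟨rfl, h⟩))
          (fun h => h2 (List.cons_prefix_cons.mpr ⟨rfl, h⟩))
        exact ⟨a :: c, a', b', i₁, j₁, hne, by simp [hi], by simp [hj]⟩
      · exact ⟨[], a, b, i, j, hab, rfl, rfl⟩

end Aux

section Main
variable {d m : ℕ}

lemma S_injective {P : Set (EuclideanSpace ℝ (Fin d))}
    {V : Finset (EuclideanSpace ℝ (Fin d))}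
    {S : Fin m → EuclideanSpace ℝ (Fin d) → EuclideanSpace ℝ (Fin d)}
    (hS : IsPPolyhedralSystem P V S) (t : Fin m) : Function.Injective (S t) := by
  obtain ⟨r, ⟨hr0, _⟩, hr⟩ := hS.1 t
  intro x y hxy
  have h : (0 : ℝ) = r * dist x y := by rw [← hr]; simp [hxy]
  have : dist x y = 0 := by
    rcases mul_eq_zero.mp h.symm with h' | h'
    · exact absurd h' (ne_of_gt hr0)
    · exact h'
  exact dist_eq_zero.mp this

lemma Sw_injective {P : Set (EuclideanSpace ℝ (Fin d))}
    {V : Finset (EuclideanSpace ℝ (Fin d))}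
    {S : Fin m → EuclideanSpace ℝ (Fin d) → EuclideanSpace ℝ (Fin d)}
    (hS : IsPPolyhedralSystem P V S) (l : List (Fin m)) :
    Function.Injective (Sw S l) := by
  induction l with
  | nil => exact fun x y h => h
  | cons a l ih => exact fun x y h => ih (S_injective hS a h)

lemma Sw_image_subset {P : Set (EuclideanSpace ℝ (Fin d))}
    {V : Finset (EuclideanSpace ℝ (Fin d))}
    {S : Fin m → EuclideanSpace ℝ (Fin d) → EuclideanSpace ℝ (Fin d)}
    (hS : IsPPolyhedralSystem P V S) (l : List (Fin m)) : Sw S l '' P ⊆ P := by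
  induction l with
  | nil => simp [Sw_nil]
  | cons a l ih =>
    rw [Sw_cons, Set.image_comp]
    exact (Set.image_mono ih).trans (hS.2.1 a)

lemma vertex_mem {P : Set (EuclideanSpace ℝ (Fin d))}
    {V : Finset (EuclideanSpace ℝ (Fin d))}
    {S : Fin m → EuclideanSpace ℝ (Fin d) → EuclideanSpace ℝ (Fin d)}
    (hS : IsPPolyhedralSystem P V S) (hVP : (V : Set (EuclideanSpace ℝ (Fin d))) ⊆ P) :
    ∀ k : List (Fin m),
      (V : Set (EuclideanSpace ℝ (Fin d))) ∩ Sw S k '' P ⊆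
        Sw S k '' (V : Set (EuclideanSpace ℝ (Fin d))) := by
  intro k
  induction k with
  | nil => intro x hx; exact ⟨x, hx.1, rfl⟩
  | cons a k ih =>
    rintro v ⟨hvV, p, hp, hpv⟩
    obtain ⟨_, ⟨t, rfl⟩, u, hu, hut⟩ := hS.2.2.2 hvV
    have hvSa : v ∈ S a '' (V : Set (EuclideanSpace ℝ (Fin d))) := by
      by_cases h : t = a
      · subst h; exact ⟨u, hu, hut⟩
      · have hvmem : v ∈ S t '' P ∩ S a '' P :=
          ⟨⟨u, hVP hu, hut⟩, Sw S k p, Sw_image_subset hS k ⟨p, hp, rfl⟩, hpv⟩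
        rcases hS.2.2.1 t a h with hemp | ⟨w, hw, _, hwV⟩
        · simp [hemp] at hvmem
        · rw [hw] at hvmem; exact hvmem ▸ hwV
    obtain ⟨u', hu', hu'v⟩ := hvSa
    have : u' = Sw S k p := S_injective hS a (hu'v.trans hpv.symm)
    obtain ⟨q, hq, hqu⟩ := ih ⟨hu', this ▸ ⟨p, hp, rfl⟩⟩
    exact ⟨q, hq, show S a (Sw S k q) = v by rw [hqu, hu'v]⟩

end Main

/-- For incomparable multiindices `i, j`, the polyhedra `P_i` and `P_j` meet in at most
one point, and their intersection equals the intersection of their vertex sets. -/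
theorem stmt_9 {d m : ℕ} (P : Set (EuclideanSpace ℝ (Fin d)))
    (V : Finset (EuclideanSpace ℝ (Fin d)))
    (S : Fin m → EuclideanSpace ℝ (Fin d) → EuclideanSpace ℝ (Fin d))
    (hP : IsPolyhedronWithVertices P V)
    (hS : IsPPolyhedralSystem P V S)
    (i j : List (Fin m)) (hij : ¬ i <+: j ∧ ¬ j <+: i) :
    (Sw S i '' P ∩ Sw S j '' P).Subsingleton ∧
    Sw S i '' P ∩ Sw S j '' P =
      Sw S i '' (V : Set (EuclideanSpace ℝ (Fin d))) ∩
        Sw S j '' (V : Set (EuclideanSpace ℝ (Fin d))) := by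
  obtain ⟨c, a, b, i₁, j₁, hab, hi, hj⟩ := decomp i j hij.1 hij.2
  subst hi; subst hj
  have hinjc := Sw_injective hS c
  have hVP := hP.2.1
  rw [Sw_append, Sw_append, Set.image_comp, Set.image_comp, Set.image_comp,
    Set.image_comp, ← Set.image_inter hinjc, ← Set.image_inter hinjc]
  set A := Sw S (a :: i₁) '' P with hA
  set B := Sw S (b :: j₁) '' P with hB
  set A' := Sw S (a :: i₁) '' (V : Set (EuclideanSpace ℝ (Fin d))) with hA'
  set B' := Sw S (b :: j₁) '' (V : Set (EuclideanSpace ℝ (Fin d))) with hB'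
  have hsubA : A ⊆ S a '' P := by
    rw [hA, Sw_cons, Set.image_comp]
    exact Set.image_mono (Sw_image_subset hS i₁)
  have hsubB : B ⊆ S b '' P := by
    rw [hB, Sw_cons, Set.image_comp]
    exact Set.image_mono (Sw_image_subset hS j₁)
  have hsub : A ∩ B ⊆ S a '' P ∩ S b '' P := Set.inter_subset_inter hsubA hsubB
  have hVsub : A' ∩ B' ⊆ A ∩ B :=
    Set.inter_subset_inter (Set.image_mono hVP) (Set.image_mono hVP)
  have key : (A ∩ B).Subsingleton ∧ A ∩ B = A' ∩ B' := by
    rcases hS.2.2.1 a b hab with hemp | ⟨v, hv, ⟨w, hwV, hwv⟩, ⟨w', hw'V, hw'v⟩⟩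
    · have h1 : A ∩ B = ∅ := Set.eq_empty_of_subset_empty (hemp ▸ hsub)
      refine ⟨by rw [h1]; exact Set.subsingleton_empty, ?_⟩
      rw [h1]
      exact (Set.eq_empty_of_subset_empty (h1 ▸ hVsub)).symm
    · have hsubv : A ∩ B ⊆ {v} := hv ▸ hsub
      refine ⟨Set.subsingleton_singleton.anti hsubv, ?_⟩
      apply Set.Subset.antisymm _ hVsub
      intro x hx
      have hxv : x = v := hsubv hx
      obtain ⟨p, hp, hpv⟩ := hx.1
      obtain ⟨p', hp', hp'v⟩ := hx.2
      have h1 : Sw S i₁ p = w :=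
        S_injective hS a ((show S a (Sw S i₁ p) = v from hpv.trans hxv).trans hwv.symm)
      have h2 : Sw S j₁ p' = w' :=
        S_injective hS b ((show S b (Sw S j₁ p') = v from hp'v.trans hxv).trans hw'v.symm)
      obtain ⟨q, hq, hq2⟩ := vertex_mem hS hVP i₁ ⟨hwV, p, hp, h1⟩
      obtain ⟨q', hq', hq'2⟩ := vertex_mem hS hVP j₁ ⟨hw'V, p', hp', h2⟩
      rw [hxv]
      exact ⟨⟨q, hq, show S a (Sw S i₁ q) = v by rw [hq2, hwv]⟩,
        ⟨q', hq', show S b (Sw S j₁ q') = v by rw [hq'2, hw'v]⟩⟩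
  exact ⟨key.1.image _, by rw [key.2]⟩
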